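/- Along the projected primal-dual gradient flow of the augmented Lagrangian, the Lyapunov function d(x,v) = (1/2)(‖x - x*‖² + ‖v - v*‖²) has nonpositive derivative: for all x ∈ K, v ∈ ℝᵐ, ⟨x - x*, Π_K(x, -∇f(x) - Aᵀv - Aᵀ(Ax-b))⟩ + ⟨v - v*, Ax - b⟩ ≤ -‖Ax - b‖² ≤ 0, where (x*, v*) is a saddle point of the Lagrangian L(x,v) = f(x) + vᵀ(Ax-b). -/

import Mathlib

open scoped RealInnerProductSpace

/-- First-order condition for a convex differentiable function. -/
lemma grad_ineq_aux {E : Type*} [NormedAddCommGroup E] [InnerProductSpace ℝ E] [CompleteSpace E]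
    {f : E → ℝ} (hf : ConvexOn ℝ Set.univ f) {x y gx : E}
    (hg : HasGradientAt f gx x) : f x + ⟪gx, y - x⟫ ≤ f y := by
  rcases eq_or_ne y x with rfl | hne
  · simp
  set φ : ℝ → ℝ := fun t => f (x + t • (y - x)) with hφ
  have hφc : ConvexOn ℝ Set.univ φ := by
    have := hf.comp_affineMap (AffineMap.lineMap x y)
    have heq : φ = f ∘ (AffineMap.lineMap x y : ℝ →ᵃ[ℝ] E) := by
      funext t
      simp [hφ, AffineMap.lineMap_apply, add_comm]
    rw [heq]
    simpa using this
  have hcurve : HasDerivAt (fun t : ℝ => x + t • (y - x)) (y - x) 0 := by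
    have h1 : HasDerivAt (fun t : ℝ => t • (y - x)) (y - x) 0 := by
      simpa using (hasDerivAt_id (0 : ℝ)).smul_const (y - x)
    simpa using h1.const_add x
  have hd : HasDerivAt φ ⟪gx, y - x⟫ 0 := by
    have hfd : HasFDerivAt f ((InnerProductSpace.toDual ℝ E) gx)
        ((fun t : ℝ => x + t • (y - x)) 0) := by simpa using hg.hasFDerivAt
    have := hfd.comp_hasDerivAt 0 hcurve
    exact (by simpa [Function.comp, InnerProductSpace.toDual_apply_apply] using this :
      HasDerivAt (f ∘ fun t : ℝ => x + t • (y - x)) ⟪gx, y - x⟫ 0)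
  have := hφc.le_slope_of_hasDerivAt (Set.mem_univ (0 : ℝ)) (Set.mem_univ (1 : ℝ))
    zero_lt_one hd
  have hslope : slope φ 0 1 = f y - f x := by
    simp [slope_def_field, hφ]
  rw [hslope] at this
  linarith

/-- Along the projected primal–dual gradient flow of the augmented Lagrangian, the
Lyapunov function `d = (1/2)(‖x - x*‖² + ‖v - v*‖²)` decreases: for all `x ∈ K`, `v`,
`⟨x - x*, Π_K(x, -∇f(x) - Aᵀv - Aᵀ(Ax - b))⟩ + ⟨v - v*, Ax - b⟩ ≤ -‖Ax - b‖² ≤ 0`,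
where `(x*, v*)` is a saddle point of `L(x,v) = f(x) + ⟨v, Ax - b⟩`. -/
theorem lyapunov_derivative_nonpos (n m : ℕ)
    (K : Set (EuclideanSpace ℝ (Fin n))) (hKc : IsClosed K) (hK : Convex ℝ K)
    (f : EuclideanSpace ℝ (Fin n) → ℝ) (hf : ConvexOn ℝ Set.univ f)
    (g : EuclideanSpace ℝ (Fin n) → EuclideanSpace ℝ (Fin n))
    (hg : ∀ x, HasGradientAt f (g x) x)
    (A : EuclideanSpace ℝ (Fin n) →L[ℝ] EuclideanSpace ℝ (Fin m))
    (b : EuclideanSpace ℝ (Fin m))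
    (L : EuclideanSpace ℝ (Fin n) → EuclideanSpace ℝ (Fin m) → ℝ)
    (hL : ∀ x v, L x v = f x + ⟪v, A x - b⟫)
    (xs : EuclideanSpace ℝ (Fin n)) (vs : EuclideanSpace ℝ (Fin m)) (hxs : xs ∈ K)
    (hfeas : A xs = b)
    (hsaddle : ∀ x ∈ K, ∀ v, L xs v ≤ L xs vs ∧ L xs vs ≤ L x vs) :
    ∀ x ∈ K, ∀ v : EuclideanSpace ℝ (Fin m), ∀ p : EuclideanSpace ℝ (Fin n),
      -- `p` is the metric projection of the (augmented) negative gradient onto `T_K(x)`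
      p ∈ closure {d | ∃ y ∈ K, ∃ l : ℝ, 0 ≤ l ∧ d = l • (y - x)} →
      (∀ u ∈ closure {d | ∃ y ∈ K, ∃ l : ℝ, 0 ≤ l ∧ d = l • (y - x)},
        ‖(-(g x) - ContinuousLinearMap.adjoint A v
            - ContinuousLinearMap.adjoint A (A x - b)) - p‖ ≤
          ‖(-(g x) - ContinuousLinearMap.adjoint A v
            - ContinuousLinearMap.adjoint A (A x - b)) - u‖) →
      ⟪x - xs, p⟫ + ⟪v - vs, A x - b⟫ ≤ -‖A x - b‖ ^ 2 ∧ -‖A x - b‖ ^ 2 ≤ 0 := by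
  intro x hx v p hpT hmin
  set w : EuclideanSpace ℝ (Fin n) :=
    -(g x) - ContinuousLinearMap.adjoint A v - ContinuousLinearMap.adjoint A (A x - b) with hw
  set S : Set (EuclideanSpace ℝ (Fin n)) :=
    {d | ∃ y ∈ K, ∃ l : ℝ, 0 ≤ l ∧ d = l • (y - x)} with hS
  -- S is a convex cone
  have hScone : ∀ c : ℝ, 0 ≤ c → ∀ d ∈ S, c • d ∈ S := by
    rintro c hc d ⟨y, hy, l, hl, rfl⟩
    exact ⟨y, hy, c * l, mul_nonneg hc hl, by rw [smul_smul]⟩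
  have hSconv : Convex ℝ S := by
    rintro d1 ⟨y1, hy1, l1, hl1, rfl⟩ d2 ⟨y2, hy2, l2, hl2, rfl⟩ a c ha hc hac
    rcases eq_or_lt_of_le (add_nonneg (mul_nonneg ha hl1) (mul_nonneg hc hl2)) with h0 | h0
    · have h1 : a * l1 = 0 := by nlinarith [mul_nonneg ha hl1, mul_nonneg hc hl2]
      have h2 : c * l2 = 0 := by nlinarith [mul_nonneg ha hl1, mul_nonneg hc hl2]
      refine ⟨y1, hy1, 0, le_refl _, ?_⟩
      rw [smul_smul, smul_smul, h1, h2]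
      simp
    · set t := a * l1 + c * l2 with ht
      refine ⟨(a * l1 / t) • y1 + (c * l2 / t) • y2, ?_, t, le_of_lt h0, ?_⟩
      · exact hK hy1 hy2 (div_nonneg (mul_nonneg ha hl1) h0.le)
          (div_nonneg (mul_nonneg hc hl2) h0.le)
          (by field_simp; exact ht.symm)
      · have hne : t ≠ 0 := ne_of_gt h0
        match_scalars <;> field_simp <;> (rw [ht]; ring)
  have hTconv : Convex ℝ (closure S) := hSconv.closure
  -- variational inequality for the projection
  have hbdd : BddBelow (Set.range fun u : closure S => ‖w - (u : EuclideanSpace ℝ (Fin n))‖) :=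
    ⟨0, by rintro r ⟨u, rfl⟩; exact norm_nonneg _⟩
  haveI : Nonempty (closure S) := ⟨⟨p, hpT⟩⟩
  have hiInf : ‖w - p‖ = ⨅ u : closure S, ‖w - (u : EuclideanSpace ℝ (Fin n))‖ := by
    apply le_antisymm
    · exact le_ciInf fun u => hmin u u.2
    · exact ciInf_le hbdd ⟨p, hpT⟩
  have hvi : ∀ u ∈ closure S, ⟪w - p, u - p⟫ ≤ 0 :=
    (norm_eq_iInf_iff_real_inner_le_zero hTconv hpT).mp hiInf
  -- 2 • p ∈ closure S
  have h2p : (2 : ℝ) • p ∈ closure S := by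
    have hcont : Continuous fun d : EuclideanSpace ℝ (Fin n) => (2 : ℝ) • d :=
      continuous_const_smul _
    have himg : (fun d : EuclideanSpace ℝ (Fin n) => (2 : ℝ) • d) '' (closure S)
        ⊆ closure ((fun d : EuclideanSpace ℝ (Fin n) => (2 : ℝ) • d) '' S) :=
      image_closure_subset_closure_image hcont
    have hsub : (fun d : EuclideanSpace ℝ (Fin n) => (2 : ℝ) • d) '' S ⊆ S := by
      rintro _ ⟨d, hd, rfl⟩; exact hScone 2 (by norm_num) d hd
    exact closure_mono hsub (himg ⟨p, hpT, rfl⟩)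
  have hwp_p : ⟪w - p, p⟫ ≤ 0 := by
    have := hvi _ h2p
    rw [two_smul] at this
    simpa using this
  have hxsx : xs - x ∈ closure S :=
    subset_closure ⟨xs, hxs, 1, by norm_num, (one_smul ℝ _).symm⟩
  have hkey : ⟪w - p, xs - x⟫ ≤ 0 := by
    have h1 := hvi _ hxsx
    rw [inner_sub_right] at h1
    linarith
  -- hence ⟪x - xs, p⟫ ≤ ⟪x - xs, w⟫
  have hp_le : ⟪x - xs, p⟫ ≤ ⟪x - xs, w⟫ := by
    have h1 : ⟪x - xs, w - p⟫ = -⟪w - p, xs - x⟫ := by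
      rw [real_inner_comm]
      rw [show x - xs = -(xs - x) by abel, inner_neg_right]
    have h2 : ⟪x - xs, w - p⟫ ≥ 0 := by rw [h1]; linarith
    rw [inner_sub_right] at h2
    linarith
  -- expand ⟪x - xs, w⟫
  have hAxs : A (x - xs) = A x - b := by rw [map_sub, hfeas]
  have hw_expand : ⟪x - xs, w⟫ = -⟪g x, x - xs⟫ - ⟪v, A x - b⟫ - ‖A x - b‖ ^ 2 := by
    rw [hw, inner_sub_right, inner_sub_right, inner_neg_right]
    rw [ContinuousLinearMap.adjoint_inner_right, ContinuousLinearMap.adjoint_inner_right, hAxs]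
    rw [real_inner_self_eq_norm_sq, real_inner_comm (x - xs) (g x),
      real_inner_comm (A x - b) v]
    try ring
  -- saddle + gradient inequality
  have hsdl := (hsaddle x hx v).2
  rw [hL, hL, hfeas, sub_self, inner_zero_right] at hsdl
  have hgrad := grad_ineq_aux hf (hg x) (y := xs)
  have hkey2 : -⟪g x, x - xs⟫ - ⟪vs, A x - b⟫ ≤ 0 := by
    have : ⟪g x, xs - x⟫ = -⟪g x, x - xs⟫ := by
      rw [show xs - x = -(x - xs) by abel, inner_neg_right]
    linarith
  -- combine
  have hdist : ⟪v - vs, A x - b⟫ = ⟪v, A x - b⟫ - ⟪vs, A x - b⟫ := inner_sub_left _ _ _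
  constructor
  · rw [hdist]; rw [hw_expand] at hp_le; linarith
  · exact neg_nonpos.mpr (by positivity)
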